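/- Let p₁, …, pₙ be mutually orthogonal self-adjoint projections in M_d(ℂ) summing to the identity, let x ∈ M_d(ℂ), and let U = Σ_j e^{2πij/n} p_j. Then (1/n) Σ_{k=1}^{n} ‖U^k x U^{-k} − x‖₂² = Σ_{j=1}^{n} ‖[p_j, x]‖₂², where ‖·‖₂ is the Hilbert–Schmidt norm and [a,b] = ab − ba. -/

import Mathlib

open Matrix

/-- Hilbert-Schmidt norm of a complex matrix. -/
noncomputable def hsNorm {d : ℕ} (z : Matrix (Fin d) (Fin d) ℂ) : ℝ :=
  Real.sqrt ((Matrix.trace (zᴴ * z)).re)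

section Aux

lemma trace_conj_self {d : ℕ} (z : Matrix (Fin d) (Fin d) ℂ) :
    Matrix.trace (zᴴ * z) = ((∑ i, ∑ j, Complex.normSq (z j i) : ℝ) : ℂ) := by
  push_cast
  simp [Matrix.trace, Matrix.mul_apply, Matrix.conjTranspose_apply, Matrix.diag,
    Complex.normSq_eq_conj_mul_self]

lemma hsNorm_sq {d : ℕ} (z : Matrix (Fin d) (Fin d) ℂ) :
    hsNorm z ^ 2 = (∑ i, ∑ j, Complex.normSq (z j i) : ℝ) := by
  rw [hsNorm, trace_conj_self]
  rw [Complex.ofReal_re, Real.sq_sqrt]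
  exact Finset.sum_nonneg fun i _ => Finset.sum_nonneg fun j _ => Complex.normSq_nonneg _

lemma trace_eq_hs {d : ℕ} (z : Matrix (Fin d) (Fin d) ℂ) :
    Matrix.trace (zᴴ * z) = ((hsNorm z ^ 2 : ℝ) : ℂ) := by
  rw [trace_conj_self, hsNorm_sq]

lemma hsNorm_sq_re {d : ℕ} (z : Matrix (Fin d) (Fin d) ℂ) :
    hsNorm z ^ 2 = (Matrix.trace (zᴴ * z)).re := by
  rw [trace_eq_hs, Complex.ofReal_re]

variable {d n : ℕ} (p : Fin n → Matrix (Fin d) (Fin d) ℂ) (x : Matrix (Fin d) (Fin d) ℂ)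

lemma trace_block (hsa : ∀ j, (p j)ᴴ = p j) (horth : ∀ j l, j ≠ l → p j * p l = 0)
    (a b a' b' : Fin n) (h : a ≠ a' ∨ b ≠ b') :
    Matrix.trace ((p a * x * p b)ᴴ * (p a' * x * p b')) = 0 := by
  rw [conjTranspose_mul, conjTranspose_mul, hsa, hsa]
  rcases h with h | h
  · have h0 : p a * (p a' * (x * p b')) = 0 := by
      rw [← mul_assoc, horth _ _ h, zero_mul]
    simp only [mul_assoc, h0, mul_zero, Matrix.trace_zero]
  · rw [Matrix.trace_mul_comm]
    have h0 : p b' * (p b * (xᴴ * p a)) = 0 := by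
      rw [← mul_assoc, horth _ _ (Ne.symm h), zero_mul]
    simp only [mul_assoc, h0, mul_zero, Matrix.trace_zero]

lemma trace_X (hsa : ∀ j, (p j)ᴴ = p j) (horth : ∀ j l, j ≠ l → p j * p l = 0)
    (f : Fin n × Fin n → ℂ) :
    Matrix.trace ((∑ q : Fin n × Fin n, f q • (p q.1 * x * p q.2))ᴴ *
        (∑ q : Fin n × Fin n, f q • (p q.1 * x * p q.2))) =
    ∑ q : Fin n × Fin n, (Complex.normSq (f q) : ℂ) *
        Matrix.trace ((p q.1 * x * p q.2)ᴴ * (p q.1 * x * p q.2)) := by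
  simp only [Matrix.conjTranspose_sum, Matrix.conjTranspose_smul, Finset.sum_mul,
    Finset.mul_sum, Matrix.smul_mul, Matrix.mul_smul, Matrix.trace_sum, Matrix.trace_smul,
    smul_smul, smul_eq_mul]
  refine Finset.sum_congr rfl fun q _ => ?_
  rw [Finset.sum_eq_single q]
  · rw [Complex.normSq_eq_conj_mul_self, Complex.star_def]; ring
  · intro r _ hr
    have : r.1 ≠ q.1 ∨ r.2 ≠ q.2 := by
      by_contra hc
      push_neg at hc
      exact hr (Prod.ext hc.1 hc.2)
    rw [trace_block p x hsa horth _ _ _ _ this, mul_zero]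
  · intro h; exact absurd (Finset.mem_univ q) h

lemma hs_X (hsa : ∀ j, (p j)ᴴ = p j) (horth : ∀ j l, j ≠ l → p j * p l = 0)
    (f : Fin n × Fin n → ℂ) :
    hsNorm (∑ q : Fin n × Fin n, f q • (p q.1 * x * p q.2)) ^ 2 =
      ∑ q : Fin n × Fin n, Complex.normSq (f q) * hsNorm (p q.1 * x * p q.2) ^ 2 := by
  rw [hsNorm_sq_re, trace_X p x hsa horth, Complex.re_sum]
  refine Finset.sum_congr rfl fun q _ => ?_
  rw [trace_eq_hs, ← Complex.ofReal_mul, Complex.ofReal_re]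

lemma sum_smul_mul (hidem : ∀ j, p j * p j = p j) (horth : ∀ j l, j ≠ l → p j * p l = 0)
    (g h : Fin n → ℂ) :
    (∑ a, g a • p a) * (∑ a, h a • p a) = ∑ a, (g a * h a) • p a := by
  rw [Finset.sum_mul]
  refine Finset.sum_congr rfl fun a _ => ?_
  rw [Finset.mul_sum, Finset.sum_eq_single a]
  · rw [Matrix.smul_mul, Matrix.mul_smul, hidem, smul_smul]
  · intro b _ hb
    rw [Matrix.smul_mul, Matrix.mul_smul, horth _ _ hb.symm]
    simp
  · intro h; exact absurd (Finset.mem_univ a) h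

lemma sum_smul_pow (hidem : ∀ j, p j * p j = p j) (horth : ∀ j l, j ≠ l → p j * p l = 0)
    (hsum : ∑ j, p j = 1) (g : Fin n → ℂ) (k : ℕ) :
    (∑ a, g a • p a) ^ k = ∑ a, (g a ^ k) • p a := by
  induction k with
  | zero => simp [hsum]
  | succ k ih =>
      rw [pow_succ, ih, sum_smul_mul p hidem horth]
      simp [pow_succ]

lemma triple_prod (g h : Fin n → ℂ) :
    (∑ a, g a • p a) * x * (∑ a, h a • p a) =
      ∑ q : Fin n × Fin n, (g q.1 * h q.2) • (p q.1 * x * p q.2) := by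
  rw [Fintype.sum_prod_type, Finset.sum_mul, Finset.sum_mul]
  refine Finset.sum_congr rfl fun a _ => ?_
  rw [Finset.mul_sum]
  refine Finset.sum_congr rfl fun b _ => ?_
  rw [Matrix.smul_mul, Matrix.smul_mul, Matrix.mul_smul, smul_smul]

lemma x_decomp (hsum : ∑ j, p j = 1) :
    x = ∑ q : Fin n × Fin n, p q.1 * x * p q.2 := by
  have := triple_prod p x (fun _ => (1:ℂ)) (fun _ => (1:ℂ))
  simp only [one_smul, one_mul] at this
  rw [hsum, one_mul, mul_one] at this
  exact this

end Aux

section Scalar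

open Complex

noncomputable def cc (n : ℕ) (j : Fin n) : ℂ :=
  Complex.exp (2 * Real.pi * Complex.I * ((j : ℕ) : ℂ) / (n : ℂ))

lemma cc_form {n : ℕ} (j : Fin n) :
    cc n j = Complex.exp (((2 * Real.pi * (j : ℕ) / n : ℝ) : ℂ) * Complex.I) := by
  unfold cc; congr 1; push_cast; ring

lemma star_cc_mul_self {n : ℕ} (j : Fin n) : star (cc n j) * cc n j = 1 := by
  rw [cc_form, Complex.star_def, ← Complex.normSq_eq_conj_mul_self, ← Complex.sq_norm,
    Complex.norm_exp_ofReal_mul_I]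
  norm_num

lemma cc_eq_pow {n : ℕ} (j : Fin n) :
    cc n j = Complex.exp (2 * Real.pi * Complex.I / n) ^ (j : ℕ) := by
  rw [← Complex.exp_nat_mul]
  unfold cc; congr 1; push_cast; ring

lemma star_cc {n : ℕ} (j : Fin n) : star (cc n j) = (cc n j)⁻¹ :=
  eq_inv_of_mul_eq_one_left (star_cc_mul_self j)

lemma cc_mul_star {n : ℕ} (a b : Fin n) :
    cc n a * star (cc n b) =
      Complex.exp (2 * Real.pi * Complex.I / n) ^ (((a : ℕ) : ℤ) - ((b : ℕ) : ℤ)) := by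
  rw [star_cc, cc_eq_pow, cc_eq_pow, zpow_sub₀ (Complex.exp_ne_zero _), zpow_natCast,
    zpow_natCast]
  exact (div_eq_mul_inv _ _).symm

lemma zeta_pow_n {n : ℕ} (hn : n ≠ 0) (a b : Fin n) :
    (cc n a * star (cc n b)) ^ n = 1 := by
  rw [cc_mul_star, ← zpow_natCast (_ ^ (((a : ℕ) : ℤ) - ((b : ℕ) : ℤ))) n, ← _root_.zpow_mul,
    mul_comm (((a : ℕ) : ℤ) - ((b : ℕ) : ℤ)) (n:ℤ), _root_.zpow_mul, zpow_natCast,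
    (Complex.isPrimitiveRoot_exp n hn).pow_eq_one, _root_.one_zpow]

lemma zeta_ne_one {n : ℕ} (hn : n ≠ 0) (a b : Fin n) (hab : a ≠ b) :
    cc n a * star (cc n b) ≠ 1 := by
  rw [cc_mul_star]
  intro h
  rw [(Complex.isPrimitiveRoot_exp n hn).zpow_eq_one_iff_dvd] at h
  have := Int.eq_zero_of_dvd_of_natAbs_lt_natAbs h ?_
  · have h2 : ((a:ℕ):ℤ) = (b:ℕ) := by omega
    exact hab (Fin.ext (by exact_mod_cast h2))
  · have ha := a.isLt; have hb := b.isLt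
    rcases Nat.lt_or_ge (a:ℕ) (b:ℕ) with hl | hl <;> [skip; skip] <;> omega

lemma zeta_star_mul_self {n : ℕ} (a b : Fin n) :
    star (cc n a * star (cc n b)) * (cc n a * star (cc n b)) = 1 := by
  simp only [star_mul', star_star]
  linear_combination (cc n b * star (cc n b)) * star_cc_mul_self a + star_cc_mul_self b

lemma geom_zero {n : ℕ} (w : ℂ) (hw : w ^ n = 1) (hw1 : w ≠ 1) :
    ∑ k ∈ Finset.Icc 1 n, w ^ k = 0 := by
  rw [← Finset.Ico_add_one_right_eq_Icc, Finset.sum_Ico_eq_sum_range]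
  simp only [Nat.succ_sub_one, Nat.add_sub_cancel]
  have : ∀ i, w ^ (1 + i) = w * w ^ i := fun i => by rw [pow_add, pow_one]
  simp only [this, ← Finset.mul_sum, geom_sum_eq hw1, hw]
  simp

lemma char_sum {n : ℕ} (ζ : ℂ) (hζ : ζ ^ n = 1) (hs : star ζ * ζ = 1)
    (h1 : ζ ≠ 1) :
    ∑ k ∈ Finset.Icc 1 n, Complex.normSq (ζ ^ k - 1) = 2 * n := by
  have hb : (star ζ) ^ n = 1 := by rw [← star_pow, hζ, star_one]
  have hb1 : star ζ ≠ 1 := fun h => h1 (by rw [← star_star ζ, h, star_one])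
  have hterm : ∀ k, ((Complex.normSq (ζ ^ k - 1) : ℝ) : ℂ) = 2 - ζ ^ k - (star ζ) ^ k := by
    intro k
    rw [← Complex.mul_conj]
    have h2 : (starRingEnd ℂ) (ζ ^ k - 1) = (star ζ) ^ k - 1 := by
      simp [map_sub, map_pow, Complex.star_def]
    rw [h2]
    have hk : ζ ^ k * (star ζ) ^ k = 1 := by
      rw [← mul_pow, mul_comm, hs, one_pow]
    linear_combination hk
  have hcast : ((∑ k ∈ Finset.Icc 1 n, Complex.normSq (ζ ^ k - 1) : ℝ) : ℂ) = ((2 * n : ℝ) : ℂ) := by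
    rw [Complex.ofReal_sum]
    calc ∑ k ∈ Finset.Icc 1 n, ((Complex.normSq (ζ ^ k - 1) : ℝ) : ℂ)
        = ∑ k ∈ Finset.Icc 1 n, (2 - ζ ^ k - (star ζ) ^ k) :=
          Finset.sum_congr rfl fun k _ => hterm k
      _ = ∑ k ∈ Finset.Icc 1 n, (2:ℂ) - ∑ k ∈ Finset.Icc 1 n, ζ ^ k
            - ∑ k ∈ Finset.Icc 1 n, (star ζ) ^ k := by
          rw [← Finset.sum_sub_distrib, ← Finset.sum_sub_distrib]
      _ = ((2 * n : ℝ) : ℂ) := by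
          rw [geom_zero ζ hζ h1, geom_zero (star ζ) hb hb1, Finset.sum_const,
            Nat.card_Icc]
          push_cast
          ring
  exact_mod_cast hcast

end Scalar

theorem stmt_9 {d n : ℕ} (p : Fin n → Matrix (Fin d) (Fin d) ℂ)
    (hsa : ∀ j, (p j)ᴴ = p j)
    (hidem : ∀ j, p j * p j = p j)
    (horth : ∀ j l, j ≠ l → p j * p l = 0)
    (hsum : ∑ j, p j = 1)
    (x : Matrix (Fin d) (Fin d) ℂ)
    (U : Matrix (Fin d) (Fin d) ℂ)
    (hU : U = ∑ j : Fin n, Complex.exp (2 * Real.pi * Complex.I * ((j : ℕ) : ℂ) / (n : ℂ)) • p j) :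
    (1 / (n : ℝ)) * ∑ k ∈ Finset.Icc 1 n, hsNorm (U ^ k * x * (star U) ^ k - x) ^ 2 =
      ∑ j : Fin n, hsNorm (p j * x - x * p j) ^ 2 := by
  rcases Nat.eq_zero_or_pos n with hn0 | hnpos
  · subst hn0; simp
  have hn : n ≠ 0 := hnpos.ne'
  have hnR : (n : ℝ) ≠ 0 := Nat.cast_ne_zero.mpr hn
  have hU' : U = ∑ j : Fin n, cc n j • p j := hU
  have hUstar : star U = ∑ j : Fin n, star (cc n j) • p j := by
    rw [hU']
    simp only [Matrix.star_eq_conjTranspose, Matrix.conjTranspose_sum,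
      Matrix.conjTranspose_smul, hsa]
  have hUk : ∀ k, U ^ k = ∑ a, (cc n a ^ k) • p a := fun k => by
    rw [hU']; exact sum_smul_pow p hidem horth hsum _ k
  have hUsk : ∀ k, (star U) ^ k = ∑ a, ((star (cc n a)) ^ k) • p a := fun k => by
    rw [hUstar]; exact sum_smul_pow p hidem horth hsum _ k
  have hdiff : ∀ k, U ^ k * x * (star U) ^ k - x =
      ∑ q : Fin n × Fin n, ((cc n q.1 * star (cc n q.2)) ^ k - 1) • (p q.1 * x * p q.2) := by
    intro k
    have h1 : U ^ k * x * (star U) ^ k =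
        ∑ q : Fin n × Fin n, (cc n q.1 ^ k * (star (cc n q.2)) ^ k) • (p q.1 * x * p q.2) := by
      rw [hUk, hUsk]; exact triple_prod p x _ _
    have h2 : x = ∑ q : Fin n × Fin n, (1:ℂ) • (p q.1 * x * p q.2) := by
      simp only [one_smul]; exact x_decomp p x hsum
    rw [h1]
    nth_rewrite 2 [h2]
    rw [← Finset.sum_sub_distrib]
    refine Finset.sum_congr rfl fun q _ => ?_
    rw [sub_smul, one_smul, mul_pow]
  -- LHS
  have hLHS : (1 / (n : ℝ)) * ∑ k ∈ Finset.Icc 1 n, hsNorm (U ^ k * x * (star U) ^ k - x) ^ 2 =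
      ∑ q : Fin n × Fin n, (if q.1 = q.2 then (0:ℝ) else 2) * hsNorm (p q.1 * x * p q.2) ^ 2 := by
    have h1 : ∀ k, hsNorm (U ^ k * x * (star U) ^ k - x) ^ 2 =
        ∑ q : Fin n × Fin n, Complex.normSq ((cc n q.1 * star (cc n q.2)) ^ k - 1) *
          hsNorm (p q.1 * x * p q.2) ^ 2 := fun k => by
      rw [hdiff k, hs_X p x hsa horth]
    rw [Finset.sum_congr rfl fun k _ => h1 k, Finset.sum_comm, Finset.mul_sum]
    refine Finset.sum_congr rfl fun q _ => ?_
    rw [← Finset.sum_mul, ← mul_assoc]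
    congr 1
    by_cases hq : q.1 = q.2
    · rw [if_pos hq]
      have hζ : cc n q.1 * star (cc n q.2) = 1 := by
        rw [hq, mul_comm]; exact star_cc_mul_self q.2
      rw [Finset.sum_eq_zero fun k _ => by rw [hζ]; simp, mul_zero]
    · rw [if_neg hq,
        char_sum _ (zeta_pow_n hn q.1 q.2) (zeta_star_mul_self q.1 q.2) (zeta_ne_one hn _ _ hq)]
      field_simp
  rw [hLHS]
  -- RHS
  have hcomm : ∀ j, p j * x - x * p j =
      ∑ q : Fin n × Fin n,
        ((if q.1 = j then (1:ℂ) else 0) - (if q.2 = j then 1 else 0)) • (p q.1 * x * p q.2) := by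
    intro j
    have hj1 : ∑ q : Fin n × Fin n, (if q.1 = j then (1:ℂ) else 0) • (p q.1 * x * p q.2)
        = p j * x := by
      rw [Fintype.sum_prod_type, Finset.sum_eq_single j]
      · simp only [eq_self_iff_true, if_true, one_smul]
        rw [← Finset.mul_sum, hsum, mul_one]
      · intro a _ ha; simp [ha]
      · intro h; exact absurd (Finset.mem_univ j) h
    have hj2 : ∑ q : Fin n × Fin n, (if q.2 = j then (1:ℂ) else 0) • (p q.1 * x * p q.2)
        = x * p j := by
      rw [Fintype.sum_prod_type_right, Finset.sum_eq_single j]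
      · simp only [eq_self_iff_true, if_true, one_smul]
        rw [← Finset.sum_mul, ← Finset.sum_mul, hsum, one_mul]
      · intro b _ hb; simp [hb]
      · intro h; exact absurd (Finset.mem_univ j) h
    simp only [sub_smul]
    rw [Finset.sum_sub_distrib, hj1, hj2]
  have h2 : ∀ j, hsNorm (p j * x - x * p j) ^ 2 =
      ∑ q : Fin n × Fin n,
        Complex.normSq ((if q.1 = j then (1:ℂ) else 0) - (if q.2 = j then 1 else 0)) *
          hsNorm (p q.1 * x * p q.2) ^ 2 := fun j => by
    rw [hcomm j, hs_X p x hsa horth]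
  rw [Finset.sum_congr rfl fun j _ => h2 j, Finset.sum_comm]
  refine Finset.sum_congr rfl fun q _ => ?_
  rw [← Finset.sum_mul]
  congr 1
  by_cases hq : q.1 = q.2
  · rw [if_pos hq]
    have : ∀ j : Fin n,
        Complex.normSq ((if q.1 = j then (1:ℂ) else 0) - (if q.2 = j then 1 else 0)) = 0 := by
      intro j; rw [hq]; simp
    simp [this]
  · rw [if_neg hq]
    have hpt : ∀ j : Fin n,
        Complex.normSq ((if q.1 = j then (1:ℂ) else 0) - (if q.2 = j then 1 else 0)) =
          (if q.1 = j then (1:ℝ) else 0) + (if q.2 = j then 1 else 0) := by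
      intro j
      by_cases h1 : q.1 = j <;> by_cases h2 : q.2 = j
      · exact absurd (h1.trans h2.symm) hq
      · simp [h1, h2]
      · simp [h1, h2]
      · simp [h1, h2]
    simp only [hpt, Finset.sum_add_distrib, Finset.sum_ite_eq, Finset.mem_univ, if_pos]
    norm_num
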